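/- Let k be an algebraically closed field with char k ≠ 2. Let γ, γ' ∈ k and ε, ε' ∈ {0,1}. Then there is a graded isomorphism W(γ,ε) ≅ W(γ',ε') if and only if ε = ε' and γ = γ'. -/

import Mathlib

noncomputable section

/-- The free algebra on three generators `x, y, z` (indexed by `Fin 3`). -/
abbrev F3 (k : Type) [Field k] : Type := FreeAlgebra k (Fin 3)

noncomputable def X (k : Type) [Field k] : F3 k := FreeAlgebra.ι k 0
noncomputable def Y (k : Type) [Field k] : F3 k := FreeAlgebra.ι k 1
noncomputable def Z (k : Type) [Field k] : F3 k := FreeAlgebra.ι k 2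

/-- The quotient of the free algebra on `x, y, z` by the two-sided ideal
generated by the set `rels`. -/
abbrev quotAlg (k : Type) [Field k] (rels : Set (F3 k)) : Type :=
  RingQuot (fun a b : F3 k => a ∈ rels ∧ b = 0)

/-- The image of the `i`-th generator in the quotient algebra. -/
noncomputable def gen (k : Type) [Field k] (rels : Set (F3 k)) (i : Fin 3) :
    quotAlg k rels :=
  RingQuot.mkAlgHom k (fun a b : F3 k => a ∈ rels ∧ b = 0) (FreeAlgebra.ι k i)

/-- The `k`-linear span of the images of the generators in the quotient. -/
noncomputable def genSpan (k : Type) [Field k] (rels : Set (F3 k)) :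
    Submodule k (quotAlg k rels) :=
  Submodule.span k (Set.range (gen k rels))

/-- There is a graded isomorphism between the two quotient algebras:
a `k`-algebra isomorphism carrying the span of the generators onto the
span of the generators. -/
def GradedIso (k : Type) [Field k] (r1 r2 : Set (F3 k)) : Prop :=
  ∃ φ : quotAlg k r1 ≃ₐ[k] quotAlg k r2,
    Submodule.map φ.toLinearMap (genSpan k r1) = genSpan k r2

/-- Relations of `W(γ,ε) = k⟨x,y,z⟩/⟨xy − yx, zx − xz + ε·x² + γ·xy, zy − yz + ε·xy + (1+γ)·y²⟩`. -/
noncomputable def Wrel (k : Type) [Field k] (γ ε : k) : Set (F3 k) :=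
  {X k * Y k - Y k * X k,
   Z k * X k - X k * Z k + ε • X k ^ 2 + γ • (X k * Y k),
   Z k * Y k - Y k * Z k + ε • (X k * Y k) + (1 + γ) • Y k ^ 2}

-- ## The polynomial representation
abbrev P3 (k : Type) [Field k] := MvPolynomial (Fin 3) k

open MvPolynomial in
def zAct (k : Type) [Field k] (γ ε : k) : Module.End k (P3 k) :=
  LinearMap.mulLeft k (X 2)
  - ε • ((LinearMap.mulLeft k (X 0)).comp
      ((LinearMap.mulLeft k (X 0)).comp (pderiv 0).toLinearMap
        + (LinearMap.mulLeft k (X 1)).comp (pderiv 1).toLinearMap))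
  - (LinearMap.mulLeft k (X 1)).comp
      (γ • (LinearMap.mulLeft k (X 0)).comp (pderiv 0).toLinearMap
       + (1+γ) • (LinearMap.mulLeft k (X 1)).comp (pderiv 1).toLinearMap)

open MvPolynomial in
def act (k : Type) [Field k] (γ ε : k) : Fin 3 → Module.End k (P3 k) :=
  ![LinearMap.mulLeft k (X 0), LinearMap.mulLeft k (X 1), zAct k γ ε]

open MvPolynomial in
lemma zAct_apply (k : Type) [Field k] (γ ε : k) (p : P3 k) :
    zAct k γ ε p = X 2 * p - ε • (X 0 * (X 0 * pderiv 0 p + X 1 * pderiv 1 p))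
      - X 1 * (γ • (X 0 * pderiv 0 p) + (1+γ) • (X 1 * pderiv 1 p)) := by
  simp [zAct]

section
variable (k : Type) [Field k] (γ ε : k)
open MvPolynomial

lemma actA1 : act k γ ε 0 * act k γ ε 1 - act k γ ε 1 * act k γ ε 0 = 0 := by
  refine LinearMap.ext fun p => ?_
  simp [act, zAct_apply, Module.End.mul_apply]
  ring

lemma actA2 : act k γ ε 2 * act k γ ε 0 - act k γ ε 0 * act k γ ε 2
    + ε • (act k γ ε 0) ^ 2 + γ • (act k γ ε 0 * act k γ ε 1) = 0 := by
  rw [pow_two]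
  refine LinearMap.ext fun p => ?_
  simp [act, zAct_apply, Module.End.mul_apply, pderiv_mul, pderiv_X, smul_smul, mul_add, add_mul,
    smul_add, Pi.single, smul_eq_C_mul]
  ring

lemma actA3 : act k γ ε 2 * act k γ ε 1 - act k γ ε 1 * act k γ ε 2
    + ε • (act k γ ε 0 * act k γ ε 1) + (1+γ) • (act k γ ε 1) ^ 2 = 0 := by
  rw [pow_two]
  refine LinearMap.ext fun p => ?_
  simp [act, zAct_apply, Module.End.mul_apply, pderiv_mul, pderiv_X, smul_smul, mul_add, add_mul,
    smul_add, Pi.single, smul_eq_C_mul]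
  ring

end

section
variable (k : Type) [Field k] (γ ε : k)

lemma lift_rel (r : F3 k) (hr : r ∈ Wrel k γ ε) :
    FreeAlgebra.lift k (act k γ ε) r = 0 := by
  simp only [Wrel, Set.mem_insert_iff, Set.mem_singleton_iff] at hr
  rcases hr with rfl | rfl | rfl
  · simpa only [map_sub, map_mul, X, Y, FreeAlgebra.lift_ι_apply] using actA1 k γ ε
  · simpa only [map_add, map_sub, map_mul, map_smul, map_pow, X, Y, Z,
      FreeAlgebra.lift_ι_apply] using actA2 k γ ε
  · simpa only [map_add, map_sub, map_mul, map_smul, map_pow, X, Y, Z,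
      FreeAlgebra.lift_ι_apply] using actA3 k γ ε

def rho : quotAlg k (Wrel k γ ε) →ₐ[k] Module.End k (P3 k) :=
  RingQuot.liftAlgHom k ⟨FreeAlgebra.lift k (act k γ ε), by
    rintro x y ⟨hx, rfl⟩
    rw [map_zero]
    exact lift_rel k γ ε x hx⟩

lemma rho_gen (i : Fin 3) : rho k γ ε (gen k (Wrel k γ ε) i) = act k γ ε i := by
  rw [gen, rho, RingQuot.liftAlgHom_mkAlgHom_apply, FreeAlgebra.lift_ι_apply]

end

section
variable (k : Type) [Field k] (γ ε : k)

lemma act_one_0 : act k γ ε 0 (1 : P3 k) = MvPolynomial.X 0 := by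
  simp [act]
lemma act_one_1 : act k γ ε 1 (1 : P3 k) = MvPolynomial.X 1 := by
  simp [act]
lemma act_one_2 : act k γ ε 2 (1 : P3 k) = MvPolynomial.X 2 := by
  simp [act, zAct_apply]

lemma gen_indep (x y z : k)
    (h : x • gen k (Wrel k γ ε) 0 + y • gen k (Wrel k γ ε) 1
        + z • gen k (Wrel k γ ε) 2 = 0) :
    x = 0 ∧ y = 0 ∧ z = 0 := by
  have h1 := congrArg (fun w => (rho k γ ε w) (1 : P3 k)) h
  simp only [map_add, map_smul, map_zero, LinearMap.add_apply, LinearMap.smul_apply,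
    LinearMap.zero_apply, rho_gen, act_one_0, act_one_1, act_one_2] at h1
  refine ⟨?_, ?_, ?_⟩
  · have := congrArg (MvPolynomial.aeval (![1,0,0] : Fin 3 → k)) h1
    simpa using this
  · have := congrArg (MvPolynomial.aeval (![0,1,0] : Fin 3 → k)) h1
    simpa using this
  · have := congrArg (MvPolynomial.aeval (![0,0,1] : Fin 3 → k)) h1
    simpa using this

end

section
variable {k : Type} [Field k] {γ ε γ' ε' : k}

set_option maxHeartbeats 1000000 in
lemma extract_coeffs (φ : quotAlg k (Wrel k γ ε) ≃ₐ[k] quotAlg k (Wrel k γ' ε'))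
    (hmap : Submodule.map φ.toLinearMap (genSpan k (Wrel k γ ε)) = genSpan k (Wrel k γ' ε')) :
    ∃ g : Fin 3 → Fin 3 → k,
      (∀ x y z : k, (x * g 0 0 + y * g 1 0 + z * g 2 0 = 0) →
        (x * g 0 1 + y * g 1 1 + z * g 2 1 = 0) →
        (x * g 0 2 + y * g 1 2 + z * g 2 2 = 0) → x = 0 ∧ y = 0 ∧ z = 0) ∧
      (¬ (g 0 2 = 0 ∧ g 1 2 = 0 ∧ g 2 2 = 0)) ∧
      (∀ a, g a 0 • gen k (Wrel k γ' ε') 0 + g a 1 • gen k (Wrel k γ' ε') 1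
          + g a 2 • gen k (Wrel k γ' ε') 2 = φ (gen k (Wrel k γ ε) a)) := by
  classical
  have hmem : ∀ a, φ (gen k (Wrel k γ ε) a) ∈ genSpan k (Wrel k γ' ε') := by
    intro a
    rw [← hmap]
    exact ⟨gen k (Wrel k γ ε) a, Submodule.subset_span ⟨a, rfl⟩, rfl⟩
  have hex : ∀ a, ∃ c : Fin 3 → k,
      ∑ l, c l • gen k (Wrel k γ' ε') l = φ (gen k (Wrel k γ ε) a) := by
    intro a
    exact (Submodule.mem_span_range_iff_exists_fun k).mp (hmem a)
  choose g hg using hex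
  have hmap' : Submodule.map φ.symm.toLinearMap (genSpan k (Wrel k γ' ε'))
      = genSpan k (Wrel k γ ε) := by
    rw [← hmap, ← Submodule.map_comp]
    have : (φ.symm.toLinearMap ∘ₗ φ.toLinearMap :
        quotAlg k (Wrel k γ ε) →ₗ[k] quotAlg k (Wrel k γ ε)) = LinearMap.id := by
      ext x; simp
    rw [this, Submodule.map_id]
  have hmem' : ∀ a, φ.symm (gen k (Wrel k γ' ε') a) ∈ genSpan k (Wrel k γ ε) := by
    intro a
    rw [← hmap']
    exact ⟨gen k (Wrel k γ' ε') a, Submodule.subset_span ⟨a, rfl⟩, rfl⟩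
  have hex' : ∀ a, ∃ c : Fin 3 → k,
      ∑ l, c l • gen k (Wrel k γ ε) l = φ.symm (gen k (Wrel k γ' ε') a) := by
    intro a
    exact (Submodule.mem_span_range_iff_exists_fun k).mp (hmem' a)
  choose h hh using hex'
  have hg3 : ∀ a, g a 0 • gen k (Wrel k γ' ε') 0 + g a 1 • gen k (Wrel k γ' ε') 1
      + g a 2 • gen k (Wrel k γ' ε') 2 = φ (gen k (Wrel k γ ε) a) := by
    intro a; have := hg a; rwa [Fin.sum_univ_three] at this
  have hh3 : ∀ a, h a 0 • gen k (Wrel k γ ε) 0 + h a 1 • gen k (Wrel k γ ε) 1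
      + h a 2 • gen k (Wrel k γ ε) 2 = φ.symm (gen k (Wrel k γ' ε') a) := by
    intro a; have := hh a; rwa [Fin.sum_univ_three] at this
  have key : ∀ j, (g j 0 * h 0 0 + g j 1 * h 1 0 + g j 2 * h 2 0) • gen k (Wrel k γ ε) 0
      + (g j 0 * h 0 1 + g j 1 * h 1 1 + g j 2 * h 2 1) • gen k (Wrel k γ ε) 1
      + (g j 0 * h 0 2 + g j 1 * h 1 2 + g j 2 * h 2 2) • gen k (Wrel k γ ε) 2
      = gen k (Wrel k γ ε) j := by
    intro j
    have e1 : gen k (Wrel k γ ε) j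
        = g j 0 • φ.symm (gen k (Wrel k γ' ε') 0) + g j 1 • φ.symm (gen k (Wrel k γ' ε') 1)
          + g j 2 • φ.symm (gen k (Wrel k γ' ε') 2) := by
      conv_lhs => rw [← φ.symm_apply_apply (gen k (Wrel k γ ε) j), ← hg3 j]
      simp [map_add, map_smul]
    rw [← hh3 0, ← hh3 1, ← hh3 2] at e1
    rw [e1]
    module
  have key' : ∀ j, (h j 0 * g 0 0 + h j 1 * g 1 0 + h j 2 * g 2 0) • gen k (Wrel k γ' ε') 0
      + (h j 0 * g 0 1 + h j 1 * g 1 1 + h j 2 * g 2 1) • gen k (Wrel k γ' ε') 1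
      + (h j 0 * g 0 2 + h j 1 * g 1 2 + h j 2 * g 2 2) • gen k (Wrel k γ' ε') 2
      = gen k (Wrel k γ' ε') j := by
    intro j
    have e1 : gen k (Wrel k γ' ε') j
        = h j 0 • φ (gen k (Wrel k γ ε) 0) + h j 1 • φ (gen k (Wrel k γ ε) 1)
          + h j 2 • φ (gen k (Wrel k γ ε) 2) := by
      conv_lhs => rw [← φ.apply_symm_apply (gen k (Wrel k γ' ε') j), ← hh3 j]
      simp [map_add, map_smul]
    rw [← hg3 0, ← hg3 1, ← hg3 2] at e1
    rw [e1]
    module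
  have d0 : ((g 0 0 * h 0 0 + g 0 1 * h 1 0 + g 0 2 * h 2 0) - 1) • gen k (Wrel k γ ε) 0
      + (g 0 0 * h 0 1 + g 0 1 * h 1 1 + g 0 2 * h 2 1) • gen k (Wrel k γ ε) 1
      + (g 0 0 * h 0 2 + g 0 1 * h 1 2 + g 0 2 * h 2 2) • gen k (Wrel k γ ε) 2 = 0 := by
    linear_combination (norm := module) key 0
  have d1 : (g 1 0 * h 0 0 + g 1 1 * h 1 0 + g 1 2 * h 2 0) • gen k (Wrel k γ ε) 0
      + ((g 1 0 * h 0 1 + g 1 1 * h 1 1 + g 1 2 * h 2 1) - 1) • gen k (Wrel k γ ε) 1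
      + (g 1 0 * h 0 2 + g 1 1 * h 1 2 + g 1 2 * h 2 2) • gen k (Wrel k γ ε) 2 = 0 := by
    linear_combination (norm := module) key 1
  have d2 : (g 2 0 * h 0 0 + g 2 1 * h 1 0 + g 2 2 * h 2 0) • gen k (Wrel k γ ε) 0
      + (g 2 0 * h 0 1 + g 2 1 * h 1 1 + g 2 2 * h 2 1) • gen k (Wrel k γ ε) 1
      + ((g 2 0 * h 0 2 + g 2 1 * h 1 2 + g 2 2 * h 2 2) - 1) • gen k (Wrel k γ ε) 2 = 0 := by
    linear_combination (norm := module) key 2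
  obtain ⟨e00, e01, e02⟩ := gen_indep k γ ε _ _ _ d0
  obtain ⟨e10, e11, e12⟩ := gen_indep k γ ε _ _ _ d1
  obtain ⟨e20, e21, e22⟩ := gen_indep k γ ε _ _ _ d2
  have d2' : (h 2 0 * g 0 0 + h 2 1 * g 1 0 + h 2 2 * g 2 0) • gen k (Wrel k γ' ε') 0
      + (h 2 0 * g 0 1 + h 2 1 * g 1 1 + h 2 2 * g 2 1) • gen k (Wrel k γ' ε') 1
      + ((h 2 0 * g 0 2 + h 2 1 * g 1 2 + h 2 2 * g 2 2) - 1) • gen k (Wrel k γ' ε') 2 = 0 := by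
    linear_combination (norm := module) key' 2
  obtain ⟨f20, f21, f22⟩ := gen_indep k γ' ε' _ _ _ d2'
  refine ⟨g, ?_, ?_, hg3⟩
  · intro x y z hv0 hv1 hv2
    refine ⟨?_, ?_, ?_⟩
    · linear_combination -(x * e00) - y * e10 - z * e20 + h 0 0 * hv0 + h 1 0 * hv1 + h 2 0 * hv2
    · linear_combination -(x * e01) - y * e11 - z * e21 + h 0 1 * hv0 + h 1 1 * hv1 + h 2 1 * hv2
    · linear_combination -(x * e02) - y * e12 - z * e22 + h 0 2 * hv0 + h 1 2 * hv1 + h 2 2 * hv2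
  · rintro ⟨u, v, w⟩
    rw [u, v, w] at f22
    norm_num at f22

end

section
variable {k : Type} [Field k] {γ ε γ' ε' : k}

lemma pd_self0 : (MvPolynomial.pderiv (R:=k) (0:Fin 3)) (MvPolynomial.X 0) = 1 :=
  MvPolynomial.pderiv_X_self 0
lemma pd_self1 : (MvPolynomial.pderiv (R:=k) (1:Fin 3)) (MvPolynomial.X 1) = 1 :=
  MvPolynomial.pderiv_X_self 1
lemma pd01 : (MvPolynomial.pderiv (R:=k) (0:Fin 3)) (MvPolynomial.X 1) = 0 := by
  rw [MvPolynomial.pderiv_X_of_ne]; decide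
lemma pd02 : (MvPolynomial.pderiv (R:=k) (0:Fin 3)) (MvPolynomial.X 2) = 0 := by
  rw [MvPolynomial.pderiv_X_of_ne]; decide
lemma pd10 : (MvPolynomial.pderiv (R:=k) (1:Fin 3)) (MvPolynomial.X 0) = 0 := by
  rw [MvPolynomial.pderiv_X_of_ne]; decide
lemma pd12 : (MvPolynomial.pderiv (R:=k) (1:Fin 3)) (MvPolynomial.X 2) = 0 := by
  rw [MvPolynomial.pderiv_X_of_ne]; decide

lemma act0_apply (p : P3 k) : act k γ ε 0 p = MvPolynomial.X 0 * p := by simp [act]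
lemma act1_apply (p : P3 k) : act k γ ε 1 p = MvPolynomial.X 1 * p := by simp [act]
lemma act2_apply (p : P3 k) : act k γ ε 2 p = zAct k γ ε p := by simp [act]

set_option maxHeartbeats 2000000 in
lemma rel1_eqs (φ : quotAlg k (Wrel k γ ε) ≃ₐ[k] quotAlg k (Wrel k γ' ε')) (g : Fin 3 → Fin 3 → k)
    (hg3 : ∀ a, g a 0 • gen k (Wrel k γ' ε') 0 + g a 1 • gen k (Wrel k γ' ε') 1
          + g a 2 • gen k (Wrel k γ' ε') 2 = φ (gen k (Wrel k γ ε) a)) :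
      ((g 0 0 * g 1 0 - g 1 0 * g 0 0) = (g 0 2 * g 1 0 - g 1 2 * g 0 0) * ε') ∧
      ((g 0 0 * g 1 1 - g 1 0 * g 0 1) + (g 0 1 * g 1 0 - g 1 1 * g 0 0) = (g 0 2 * g 1 0 - g 1 2 * g 0 0) * γ' + (g 0 2 * g 1 1 - g 1 2 * g 0 1) * ε') ∧
      ((g 0 1 * g 1 1 - g 1 1 * g 0 1) = (g 0 2 * g 1 1 - g 1 2 * g 0 1) * (1 + γ')) ∧
      ((g 0 0 * g 1 2 - g 1 0 * g 0 2) + (g 0 2 * g 1 0 - g 1 2 * g 0 0) = 0) ∧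
      ((g 0 1 * g 1 2 - g 1 1 * g 0 2) + (g 0 2 * g 1 1 - g 1 2 * g 0 1) = 0) ∧
      ((g 0 2 * g 1 2 - g 1 2 * g 0 2) = 0) := by
  have hmem : (X k * Y k - Y k * X k) ∈ Wrel k γ ε := Set.mem_insert _ _
  have h0 : RingQuot.mkAlgHom k (fun a b : F3 k => a ∈ Wrel k γ ε ∧ b = 0)
      (X k * Y k - Y k * X k) = 0 := by
    rw [RingQuot.mkAlgHom_rel k ⟨hmem, rfl⟩]; exact map_zero _
  have hr : (gen k (Wrel k γ ε) 0) * (gen k (Wrel k γ ε) 1)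
      - (gen k (Wrel k γ ε) 1) * (gen k (Wrel k γ ε) 0) = 0 := by
    simpa only [map_sub, map_mul, X, Y, gen] using h0
  have hphi : (g 0 0 • gen k (Wrel k γ' ε') 0 + g 0 1 • gen k (Wrel k γ' ε') 1 + g 0 2 • gen k (Wrel k γ' ε') 2) * (g 1 0 • gen k (Wrel k γ' ε') 0 + g 1 1 • gen k (Wrel k γ' ε') 1 + g 1 2 • gen k (Wrel k γ' ε') 2) - (g 1 0 • gen k (Wrel k γ' ε') 0 + g 1 1 • gen k (Wrel k γ' ε') 1 + g 1 2 • gen k (Wrel k γ' ε') 2) * (g 0 0 • gen k (Wrel k γ' ε') 0 + g 0 1 • gen k (Wrel k γ' ε') 1 + g 0 2 • gen k (Wrel k γ' ε') 2) = 0 := by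
    rw [hg3 0, hg3 1]
    have := congrArg φ hr
    simpa [map_sub, map_mul] using this
  have hE := congrArg (rho k γ' ε') hphi
  simp only [map_sub, map_mul, map_add, map_smul, map_zero, rho_gen] at hE
  have hP := LinearMap.congr_fun hE (1 : P3 k)
  simp only [Module.End.mul_apply, LinearMap.add_apply, LinearMap.sub_apply,
    LinearMap.smul_apply, LinearMap.zero_apply, act0_apply, act1_apply, act2_apply,
    zAct_apply, map_add, map_sub, map_smul, map_one, map_mul, mul_one, MvPolynomial.pderiv_mul,
    Derivation.map_one_eq_zero, pd_self0, pd_self1, pd01, pd02, pd10, pd12,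
    smul_zero, add_zero, zero_add, mul_zero, zero_mul, sub_zero, zero_sub, smul_eq_mul] at hP
  have q100 := congrArg (MvPolynomial.aeval (![1,0,0] : Fin 3 → k)) hP
  simp only [map_add, map_sub, map_mul, map_smul, map_zero, map_one,
    MvPolynomial.aeval_X, Matrix.cons_val_zero, Matrix.cons_val_one, Matrix.head_cons,
    Matrix.cons_val_two, Matrix.tail_cons, smul_eq_mul] at q100
  ring_nf at q100
  have q010 := congrArg (MvPolynomial.aeval (![0,1,0] : Fin 3 → k)) hP
  simp only [map_add, map_sub, map_mul, map_smul, map_zero, map_one,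
    MvPolynomial.aeval_X, Matrix.cons_val_zero, Matrix.cons_val_one, Matrix.head_cons,
    Matrix.cons_val_two, Matrix.tail_cons, smul_eq_mul] at q010
  ring_nf at q010
  have q001 := congrArg (MvPolynomial.aeval (![0,0,1] : Fin 3 → k)) hP
  simp only [map_add, map_sub, map_mul, map_smul, map_zero, map_one,
    MvPolynomial.aeval_X, Matrix.cons_val_zero, Matrix.cons_val_one, Matrix.head_cons,
    Matrix.cons_val_two, Matrix.tail_cons, smul_eq_mul] at q001
  ring_nf at q001
  have q110 := congrArg (MvPolynomial.aeval (![1,1,0] : Fin 3 → k)) hP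
  simp only [map_add, map_sub, map_mul, map_smul, map_zero, map_one,
    MvPolynomial.aeval_X, Matrix.cons_val_zero, Matrix.cons_val_one, Matrix.head_cons,
    Matrix.cons_val_two, Matrix.tail_cons, smul_eq_mul] at q110
  ring_nf at q110
  have q101 := congrArg (MvPolynomial.aeval (![1,0,1] : Fin 3 → k)) hP
  simp only [map_add, map_sub, map_mul, map_smul, map_zero, map_one,
    MvPolynomial.aeval_X, Matrix.cons_val_zero, Matrix.cons_val_one, Matrix.head_cons,
    Matrix.cons_val_two, Matrix.tail_cons, smul_eq_mul] at q101
  ring_nf at q101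
  have q011 := congrArg (MvPolynomial.aeval (![0,1,1] : Fin 3 → k)) hP
  simp only [map_add, map_sub, map_mul, map_smul, map_zero, map_one,
    MvPolynomial.aeval_X, Matrix.cons_val_zero, Matrix.cons_val_one, Matrix.head_cons,
    Matrix.cons_val_two, Matrix.tail_cons, smul_eq_mul] at q011
  ring_nf at q011
  exact ⟨by linear_combination q100, by linear_combination q110 - q100 - q010,
    by linear_combination q010, by linear_combination q101 - q100 - q001,
    by linear_combination q011 - q010 - q001, by linear_combination q001⟩


set_option maxHeartbeats 2000000 in
lemma rel2_eqs (φ : quotAlg k (Wrel k γ ε) ≃ₐ[k] quotAlg k (Wrel k γ' ε')) (g : Fin 3 → Fin 3 → k)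
    (hg3 : ∀ a, g a 0 • gen k (Wrel k γ' ε') 0 + g a 1 • gen k (Wrel k γ' ε') 1
          + g a 2 • gen k (Wrel k γ' ε') 2 = φ (gen k (Wrel k γ ε) a)) :
      ((g 2 0 * g 0 0 - g 0 0 * g 2 0 + ε * (g 0 0 * g 0 0) + γ * (g 0 0 * g 1 0)) = (g 2 2 * g 0 0 - g 0 2 * g 2 0 + ε * (g 0 2 * g 0 0) + γ * (g 0 2 * g 1 0)) * ε') ∧
      ((g 2 0 * g 0 1 - g 0 0 * g 2 1 + ε * (g 0 0 * g 0 1) + γ * (g 0 0 * g 1 1)) + (g 2 1 * g 0 0 - g 0 1 * g 2 0 + ε * (g 0 1 * g 0 0) + γ * (g 0 1 * g 1 0)) = (g 2 2 * g 0 0 - g 0 2 * g 2 0 + ε * (g 0 2 * g 0 0) + γ * (g 0 2 * g 1 0)) * γ' + (g 2 2 * g 0 1 - g 0 2 * g 2 1 + ε * (g 0 2 * g 0 1) + γ * (g 0 2 * g 1 1)) * ε') ∧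
      ((g 2 1 * g 0 1 - g 0 1 * g 2 1 + ε * (g 0 1 * g 0 1) + γ * (g 0 1 * g 1 1)) = (g 2 2 * g 0 1 - g 0 2 * g 2 1 + ε * (g 0 2 * g 0 1) + γ * (g 0 2 * g 1 1)) * (1 + γ')) ∧
      ((g 2 0 * g 0 2 - g 0 0 * g 2 2 + ε * (g 0 0 * g 0 2) + γ * (g 0 0 * g 1 2)) + (g 2 2 * g 0 0 - g 0 2 * g 2 0 + ε * (g 0 2 * g 0 0) + γ * (g 0 2 * g 1 0)) = 0) ∧
      ((g 2 1 * g 0 2 - g 0 1 * g 2 2 + ε * (g 0 1 * g 0 2) + γ * (g 0 1 * g 1 2)) + (g 2 2 * g 0 1 - g 0 2 * g 2 1 + ε * (g 0 2 * g 0 1) + γ * (g 0 2 * g 1 1)) = 0) ∧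
      ((g 2 2 * g 0 2 - g 0 2 * g 2 2 + ε * (g 0 2 * g 0 2) + γ * (g 0 2 * g 1 2)) = 0) := by
  have hmem : (Z k * X k - X k * Z k + ε • X k ^ 2 + γ • (X k * Y k)) ∈ Wrel k γ ε :=
    Set.mem_insert_of_mem _ (Set.mem_insert _ _)
  have h0 : RingQuot.mkAlgHom k (fun a b : F3 k => a ∈ Wrel k γ ε ∧ b = 0)
      (Z k * X k - X k * Z k + ε • X k ^ 2 + γ • (X k * Y k)) = 0 := by
    rw [RingQuot.mkAlgHom_rel k ⟨hmem, rfl⟩]; exact map_zero _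
  have hr : (gen k (Wrel k γ ε) 2) * (gen k (Wrel k γ ε) 0)
      - (gen k (Wrel k γ ε) 0) * (gen k (Wrel k γ ε) 2)
      + ε • ((gen k (Wrel k γ ε) 0) * (gen k (Wrel k γ ε) 0))
      + γ • ((gen k (Wrel k γ ε) 0) * (gen k (Wrel k γ ε) 1)) = 0 := by
    simpa only [map_sub, map_add, map_smul, map_mul, map_pow, X, Y, Z, gen, pow_two] using h0
  have hphi : (g 2 0 • gen k (Wrel k γ' ε') 0 + g 2 1 • gen k (Wrel k γ' ε') 1 + g 2 2 • gen k (Wrel k γ' ε') 2) * (g 0 0 • gen k (Wrel k γ' ε') 0 + g 0 1 • gen k (Wrel k γ' ε') 1 + g 0 2 • gen k (Wrel k γ' ε') 2) - (g 0 0 • gen k (Wrel k γ' ε') 0 + g 0 1 • gen k (Wrel k γ' ε') 1 + g 0 2 • gen k (Wrel k γ' ε') 2) * (g 2 0 • gen k (Wrel k γ' ε') 0 + g 2 1 • gen k (Wrel k γ' ε') 1 + g 2 2 • gen k (Wrel k γ' ε') 2) + ε • ((g 0 0 • gen k (Wrel k γ' ε') 0 + g 0 1 • gen k (Wrel k γ'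 ε') 1 + g 0 2 • gen k (Wrel k γ' ε') 2) * (g 0 0 • gen k (Wrel k γ' ε') 0 + g 0 1 • gen k (Wrel k γ' ε') 1 + g 0 2 • gen k (Wrel k γ' ε') 2)) + γ • ((g 0 0 • gen k (Wrel k γ' ε') 0 + g 0 1 • gen k (Wrel k γ' ε') 1 + g 0 2 • gen k (Wrel k γ' ε') 2) * (g 1 0 • gen k (Wrel k γ' ε') 0 + g 1 1 • gen k (Wrel k γ' ε') 1 + g 1 2 • gen k (Wrel k γ' ε') 2)) = 0 := by
    rw [hg3 0, hg3 1, hg3 2]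
    have := congrArg φ hr
    simpa [map_sub, map_add, map_mul, map_smul] using this
  have hE := congrArg (rho k γ' ε') hphi
  simp only [map_sub, map_mul, map_add, map_smul, map_zero, rho_gen] at hE
  have hP := LinearMap.congr_fun hE (1 : P3 k)
  simp only [Module.End.mul_apply, LinearMap.add_apply, LinearMap.sub_apply,
    LinearMap.smul_apply, LinearMap.zero_apply, act0_apply, act1_apply, act2_apply,
    zAct_apply, map_add, map_sub, map_smul, map_one, map_mul, mul_one, MvPolynomial.pderiv_mul,
    Derivation.map_one_eq_zero, pd_self0, pd_self1, pd01, pd02, pd10, pd12,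
    smul_zero, add_zero, zero_add, mul_zero, zero_mul, sub_zero, zero_sub, smul_eq_mul] at hP
  have q100 := congrArg (MvPolynomial.aeval (![1,0,0] : Fin 3 → k)) hP
  simp only [map_add, map_sub, map_mul, map_smul, map_zero, map_one,
    MvPolynomial.aeval_X, Matrix.cons_val_zero, Matrix.cons_val_one, Matrix.head_cons,
    Matrix.cons_val_two, Matrix.tail_cons, smul_eq_mul] at q100
  ring_nf at q100
  have q010 := congrArg (MvPolynomial.aeval (![0,1,0] : Fin 3 → k)) hP
  simp only [map_add, map_sub, map_mul, map_smul, map_zero, map_one,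
    MvPolynomial.aeval_X, Matrix.cons_val_zero, Matrix.cons_val_one, Matrix.head_cons,
    Matrix.cons_val_two, Matrix.tail_cons, smul_eq_mul] at q010
  ring_nf at q010
  have q001 := congrArg (MvPolynomial.aeval (![0,0,1] : Fin 3 → k)) hP
  simp only [map_add, map_sub, map_mul, map_smul, map_zero, map_one,
    MvPolynomial.aeval_X, Matrix.cons_val_zero, Matrix.cons_val_one, Matrix.head_cons,
    Matrix.cons_val_two, Matrix.tail_cons, smul_eq_mul] at q001
  ring_nf at q001
  have q110 := congrArg (MvPolynomial.aeval (![1,1,0] : Fin 3 → k)) hP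
  simp only [map_add, map_sub, map_mul, map_smul, map_zero, map_one,
    MvPolynomial.aeval_X, Matrix.cons_val_zero, Matrix.cons_val_one, Matrix.head_cons,
    Matrix.cons_val_two, Matrix.tail_cons, smul_eq_mul] at q110
  ring_nf at q110
  have q101 := congrArg (MvPolynomial.aeval (![1,0,1] : Fin 3 → k)) hP
  simp only [map_add, map_sub, map_mul, map_smul, map_zero, map_one,
    MvPolynomial.aeval_X, Matrix.cons_val_zero, Matrix.cons_val_one, Matrix.head_cons,
    Matrix.cons_val_two, Matrix.tail_cons, smul_eq_mul] at q101
  ring_nf at q101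
  have q011 := congrArg (MvPolynomial.aeval (![0,1,1] : Fin 3 → k)) hP
  simp only [map_add, map_sub, map_mul, map_smul, map_zero, map_one,
    MvPolynomial.aeval_X, Matrix.cons_val_zero, Matrix.cons_val_one, Matrix.head_cons,
    Matrix.cons_val_two, Matrix.tail_cons, smul_eq_mul] at q011
  ring_nf at q011
  exact ⟨by linear_combination q100, by linear_combination q110 - q100 - q010,
    by linear_combination q010, by linear_combination q101 - q100 - q001,
    by linear_combination q011 - q010 - q001, by linear_combination q001⟩


set_option maxHeartbeats 2000000 in
lemma rel3_eqs (φ : quotAlg k (Wrel k γ ε) ≃ₐ[k] quotAlg k (Wrel k γ' ε')) (g : Fin 3 → Fin 3 → k)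
    (hg3 : ∀ a, g a 0 • gen k (Wrel k γ' ε') 0 + g a 1 • gen k (Wrel k γ' ε') 1
          + g a 2 • gen k (Wrel k γ' ε') 2 = φ (gen k (Wrel k γ ε) a)) :
      ((g 2 0 * g 1 0 - g 1 0 * g 2 0 + ε * (g 0 0 * g 1 0) + (1 + γ) * (g 1 0 * g 1 0)) = (g 2 2 * g 1 0 - g 1 2 * g 2 0 + ε * (g 0 2 * g 1 0) + (1 + γ) * (g 1 2 * g 1 0)) * ε') ∧
      ((g 2 0 * g 1 1 - g 1 0 * g 2 1 + ε * (g 0 0 * g 1 1) + (1 + γ) * (g 1 0 * g 1 1)) + (g 2 1 * g 1 0 - g 1 1 * g 2 0 + ε * (g 0 1 * g 1 0) + (1 + γ) * (g 1 1 * g 1 0)) = (g 2 2 * g 1 0 - g 1 2 * g 2 0 + ε * (g 0 2 * g 1 0) + (1 + γ) * (g 1 2 * g 1 0)) * γ' + (g 2 2 * g 1 1 - g 1 2 * g 2 1 + ε * (g 0 2 * g 1 1) + (1 + γ) * (g 1 2 * g 1 1)) * ε') ∧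
      ((g 2 1 * g 1 1 - g 1 1 * g 2 1 + ε * (g 0 1 * g 1 1) + (1 + γ) * (g 1 1 * g 1 1)) = (g 2 2 * g 1 1 - g 1 2 * g 2 1 + ε * (g 0 2 * g 1 1) + (1 + γ) * (g 1 2 * g 1 1)) * (1 + γ')) ∧
      ((g 2 0 * g 1 2 - g 1 0 * g 2 2 + ε * (g 0 0 * g 1 2) + (1 + γ) * (g 1 0 * g 1 2)) + (g 2 2 * g 1 0 - g 1 2 * g 2 0 + ε * (g 0 2 * g 1 0) + (1 + γ) * (g 1 2 * g 1 0)) = 0) ∧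
      ((g 2 1 * g 1 2 - g 1 1 * g 2 2 + ε * (g 0 1 * g 1 2) + (1 + γ) * (g 1 1 * g 1 2)) + (g 2 2 * g 1 1 - g 1 2 * g 2 1 + ε * (g 0 2 * g 1 1) + (1 + γ) * (g 1 2 * g 1 1)) = 0) ∧
      ((g 2 2 * g 1 2 - g 1 2 * g 2 2 + ε * (g 0 2 * g 1 2) + (1 + γ) * (g 1 2 * g 1 2)) = 0) := by
  have hmem : (Z k * Y k - Y k * Z k + ε • (X k * Y k) + (1 + γ) • Y k ^ 2) ∈ Wrel k γ ε := by
    right; right; rfl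
  have h0 : RingQuot.mkAlgHom k (fun a b : F3 k => a ∈ Wrel k γ ε ∧ b = 0)
      (Z k * Y k - Y k * Z k + ε • (X k * Y k) + (1 + γ) • Y k ^ 2) = 0 := by
    rw [RingQuot.mkAlgHom_rel k ⟨hmem, rfl⟩]; exact map_zero _
  have hr : (gen k (Wrel k γ ε) 2) * (gen k (Wrel k γ ε) 1)
      - (gen k (Wrel k γ ε) 1) * (gen k (Wrel k γ ε) 2)
      + ε • ((gen k (Wrel k γ ε) 0) * (gen k (Wrel k γ ε) 1))
      + (1 + γ) • ((gen k (Wrel k γ ε) 1) * (gen k (Wrel k γ ε) 1)) = 0 := by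
    simpa only [map_sub, map_add, map_smul, map_mul, map_pow, X, Y, Z, gen, pow_two] using h0
  have hphi : (g 2 0 • gen k (Wrel k γ' ε') 0 + g 2 1 • gen k (Wrel k γ' ε') 1 + g 2 2 • gen k (Wrel k γ' ε') 2) * (g 1 0 • gen k (Wrel k γ' ε') 0 + g 1 1 • gen k (Wrel k γ' ε') 1 + g 1 2 • gen k (Wrel k γ' ε') 2) - (g 1 0 • gen k (Wrel k γ' ε') 0 + g 1 1 • gen k (Wrel k γ' ε') 1 + g 1 2 • gen k (Wrel k γ' ε') 2) * (g 2 0 • gen k (Wrel k γ' ε') 0 + g 2 1 • gen k (Wrel k γ' ε') 1 + g 2 2 • gen k (Wrel k γ' ε') 2) + ε • ((g 0 0 • gen k (Wrel k γ' ε') 0 + g 0 1 • gen k (Wrel k γ' ε') 1 + g 0 2 • gen k (Wrel k γ' ε') 2) * (g 1 0 • gen k (Wrel k γ' ε') 0 + g 1 1 • gen k (Wrel k γ' ε') 1 + g 1 2 • gen k (Wrel k γ' ε') 2)) + (1 + γ) • ((g 1 0 • gen k (Wrel k γ' ε') 0 + g 1 1 • gen k (Wrel k γ' ε') 1 + g 1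 2 • gen k (Wrel k γ' ε') 2) * (g 1 0 • gen k (Wrel k γ' ε') 0 + g 1 1 • gen k (Wrel k γ' ε') 1 + g 1 2 • gen k (Wrel k γ' ε') 2)) = 0 := by
    rw [hg3 0, hg3 1, hg3 2]
    have := congrArg φ hr
    simpa [map_sub, map_add, map_mul, map_smul] using this
  have hE := congrArg (rho k γ' ε') hphi
  simp only [map_sub, map_mul, map_add, map_smul, map_zero, rho_gen] at hE
  have hP := LinearMap.congr_fun hE (1 : P3 k)
  simp only [Module.End.mul_apply, LinearMap.add_apply, LinearMap.sub_apply,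
    LinearMap.smul_apply, LinearMap.zero_apply, act0_apply, act1_apply, act2_apply,
    zAct_apply, map_add, map_sub, map_smul, map_one, map_mul, mul_one, MvPolynomial.pderiv_mul,
    Derivation.map_one_eq_zero, pd_self0, pd_self1, pd01, pd02, pd10, pd12,
    smul_zero, add_zero, zero_add, mul_zero, zero_mul, sub_zero, zero_sub, smul_eq_mul] at hP
  have q100 := congrArg (MvPolynomial.aeval (![1,0,0] : Fin 3 → k)) hP
  simp only [map_add, map_sub, map_mul, map_smul, map_zero, map_one,
    MvPolynomial.aeval_X, Matrix.cons_val_zero, Matrix.cons_val_one, Matrix.head_cons,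
    Matrix.cons_val_two, Matrix.tail_cons, smul_eq_mul] at q100
  ring_nf at q100
  have q010 := congrArg (MvPolynomial.aeval (![0,1,0] : Fin 3 → k)) hP
  simp only [map_add, map_sub, map_mul, map_smul, map_zero, map_one,
    MvPolynomial.aeval_X, Matrix.cons_val_zero, Matrix.cons_val_one, Matrix.head_cons,
    Matrix.cons_val_two, Matrix.tail_cons, smul_eq_mul] at q010
  ring_nf at q010
  have q001 := congrArg (MvPolynomial.aeval (![0,0,1] : Fin 3 → k)) hP
  simp only [map_add, map_sub, map_mul, map_smul, map_zero, map_one,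
    MvPolynomial.aeval_X, Matrix.cons_val_zero, Matrix.cons_val_one, Matrix.head_cons,
    Matrix.cons_val_two, Matrix.tail_cons, smul_eq_mul] at q001
  ring_nf at q001
  have q110 := congrArg (MvPolynomial.aeval (![1,1,0] : Fin 3 → k)) hP
  simp only [map_add, map_sub, map_mul, map_smul, map_zero, map_one,
    MvPolynomial.aeval_X, Matrix.cons_val_zero, Matrix.cons_val_one, Matrix.head_cons,
    Matrix.cons_val_two, Matrix.tail_cons, smul_eq_mul] at q110
  ring_nf at q110
  have q101 := congrArg (MvPolynomial.aeval (![1,0,1] : Fin 3 → k)) hP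
  simp only [map_add, map_sub, map_mul, map_smul, map_zero, map_one,
    MvPolynomial.aeval_X, Matrix.cons_val_zero, Matrix.cons_val_one, Matrix.head_cons,
    Matrix.cons_val_two, Matrix.tail_cons, smul_eq_mul] at q101
  ring_nf at q101
  have q011 := congrArg (MvPolynomial.aeval (![0,1,1] : Fin 3 → k)) hP
  simp only [map_add, map_sub, map_mul, map_smul, map_zero, map_one,
    MvPolynomial.aeval_X, Matrix.cons_val_zero, Matrix.cons_val_one, Matrix.head_cons,
    Matrix.cons_val_two, Matrix.tail_cons, smul_eq_mul] at q011
  ring_nf at q011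
  exact ⟨by linear_combination q100, by linear_combination q110 - q100 - q010,
    by linear_combination q010, by linear_combination q101 - q100 - q001,
    by linear_combination q011 - q010 - q001, by linear_combination q001⟩


end

section
variable {k : Type} [Field k]

lemma fin11 (g : Fin 3 → Fin 3 → k) (γ ε γ' ε' : k) (he : ε = 1) (he' : ε' = 1)
    (hcol : ∀ x y z : k, (x * g 0 0 + y * g 1 0 + z * g 2 0 = 0) →
      (x * g 0 1 + y * g 1 1 + z * g 2 1 = 0) →
      (x * g 0 2 + y * g 1 2 + z * g 2 2 = 0) → x = 0 ∧ y = 0 ∧ z = 0)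
    (hrow : ¬(g 0 2 = 0 ∧ g 1 2 = 0 ∧ g 2 2 = 0))
    (h1 :
      ((g 0 0 * g 1 0 - g 1 0 * g 0 0) = (g 0 2 * g 1 0 - g 1 2 * g 0 0) * ε') ∧
      ((g 0 0 * g 1 1 - g 1 0 * g 0 1) + (g 0 1 * g 1 0 - g 1 1 * g 0 0) = (g 0 2 * g 1 0 - g 1 2 * g 0 0) * γ' + (g 0 2 * g 1 1 - g 1 2 * g 0 1) * ε') ∧
      ((g 0 1 * g 1 1 - g 1 1 * g 0 1) = (g 0 2 * g 1 1 - g 1 2 * g 0 1) * (1 + γ')) ∧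
      ((g 0 0 * g 1 2 - g 1 0 * g 0 2) + (g 0 2 * g 1 0 - g 1 2 * g 0 0) = 0) ∧
      ((g 0 1 * g 1 2 - g 1 1 * g 0 2) + (g 0 2 * g 1 1 - g 1 2 * g 0 1) = 0) ∧
      ((g 0 2 * g 1 2 - g 1 2 * g 0 2) = 0))
    (h2 :
      ((g 2 0 * g 0 0 - g 0 0 * g 2 0 + ε * (g 0 0 * g 0 0) + γ * (g 0 0 * g 1 0)) = (g 2 2 * g 0 0 - g 0 2 * g 2 0 + ε * (g 0 2 * g 0 0) + γ * (g 0 2 * g 1 0)) * ε') ∧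
      ((g 2 0 * g 0 1 - g 0 0 * g 2 1 + ε * (g 0 0 * g 0 1) + γ * (g 0 0 * g 1 1)) + (g 2 1 * g 0 0 - g 0 1 * g 2 0 + ε * (g 0 1 * g 0 0) + γ * (g 0 1 * g 1 0)) = (g 2 2 * g 0 0 - g 0 2 * g 2 0 + ε * (g 0 2 * g 0 0) + γ * (g 0 2 * g 1 0)) * γ' + (g 2 2 * g 0 1 - g 0 2 * g 2 1 + ε * (g 0 2 * g 0 1) + γ * (g 0 2 * g 1 1)) * ε') ∧
      ((g 2 1 * g 0 1 - g 0 1 * g 2 1 + ε * (g 0 1 * g 0 1) + γ * (g 0 1 * g 1 1)) = (g 2 2 * g 0 1 - g 0 2 * g 2 1 + ε * (g 0 2 * g 0 1) + γ * (g 0 2 * g 1 1)) * (1 + γ')) ∧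
      ((g 2 0 * g 0 2 - g 0 0 * g 2 2 + ε * (g 0 0 * g 0 2) + γ * (g 0 0 * g 1 2)) + (g 2 2 * g 0 0 - g 0 2 * g 2 0 + ε * (g 0 2 * g 0 0) + γ * (g 0 2 * g 1 0)) = 0) ∧
      ((g 2 1 * g 0 2 - g 0 1 * g 2 2 + ε * (g 0 1 * g 0 2) + γ * (g 0 1 * g 1 2)) + (g 2 2 * g 0 1 - g 0 2 * g 2 1 + ε * (g 0 2 * g 0 1) + γ * (g 0 2 * g 1 1)) = 0) ∧
      ((g 2 2 * g 0 2 - g 0 2 * g 2 2 + ε * (g 0 2 * g 0 2) + γ * (g 0 2 * g 1 2)) = 0))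
    (h3 :
      ((g 2 0 * g 1 0 - g 1 0 * g 2 0 + ε * (g 0 0 * g 1 0) + (1 + γ) * (g 1 0 * g 1 0)) = (g 2 2 * g 1 0 - g 1 2 * g 2 0 + ε * (g 0 2 * g 1 0) + (1 + γ) * (g 1 2 * g 1 0)) * ε') ∧
      ((g 2 0 * g 1 1 - g 1 0 * g 2 1 + ε * (g 0 0 * g 1 1) + (1 + γ) * (g 1 0 * g 1 1)) + (g 2 1 * g 1 0 - g 1 1 * g 2 0 + ε * (g 0 1 * g 1 0) + (1 + γ) * (g 1 1 * g 1 0)) = (g 2 2 * g 1 0 - g 1 2 * g 2 0 + ε * (g 0 2 * g 1 0) + (1 + γ) * (g 1 2 * g 1 0)) * γ' + (g 2 2 * g 1 1 - g 1 2 * g 2 1 + ε * (g 0 2 * g 1 1) + (1 + γ) * (g 1 2 * g 1 1)) * ε') ∧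
      ((g 2 1 * g 1 1 - g 1 1 * g 2 1 + ε * (g 0 1 * g 1 1) + (1 + γ) * (g 1 1 * g 1 1)) = (g 2 2 * g 1 1 - g 1 2 * g 2 1 + ε * (g 0 2 * g 1 1) + (1 + γ) * (g 1 2 * g 1 1)) * (1 + γ')) ∧
      ((g 2 0 * g 1 2 - g 1 0 * g 2 2 + ε * (g 0 0 * g 1 2) + (1 + γ) * (g 1 0 * g 1 2)) + (g 2 2 * g 1 0 - g 1 2 * g 2 0 + ε * (g 0 2 * g 1 0) + (1 + γ) * (g 1 2 * g 1 0)) = 0) ∧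
      ((g 2 1 * g 1 2 - g 1 1 * g 2 2 + ε * (g 0 1 * g 1 2) + (1 + γ) * (g 1 1 * g 1 2)) + (g 2 2 * g 1 1 - g 1 2 * g 2 1 + ε * (g 0 2 * g 1 1) + (1 + γ) * (g 1 2 * g 1 1)) = 0) ∧
      ((g 2 2 * g 1 2 - g 1 2 * g 2 2 + ε * (g 0 2 * g 1 2) + (1 + γ) * (g 1 2 * g 1 2)) = 0)) : γ = γ' := by
  subst he he'
  obtain ⟨h1e1, h1e2, h1e3, h1e4, h1e5, h1e6⟩ := h1
  obtain ⟨h2e1, h2e2, h2e3, h2e4, h2e5, h2e6⟩ := h2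
  obtain ⟨h3e1, h3e2, h3e3, h3e4, h3e5, h3e6⟩ := h3
  have k1 : g 0 2 * g 1 0 - g 1 2 * g 0 0 = 0 := by linear_combination -h1e1
  have k2 : g 0 2 * g 1 1 - g 1 2 * g 0 1 = 0 := by linear_combination -h1e2 + γ' * h1e1
  obtain ⟨hB2, hA2n, -⟩ := hcol (g 1 2) (-(g 0 2)) 0
    (by linear_combination -k1) (by linear_combination -k2) (by ring)
  have hA2 : g 0 2 = 0 := neg_eq_zero.mp hA2n
  have hC2 : g 2 2 ≠ 0 := fun hc => hrow ⟨hA2, hB2, hc⟩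
  by_cases hA0 : g 0 0 = 0
  · have hA1 : g 0 1 ≠ 0 := by
      intro h
      obtain ⟨h', -, -⟩ := hcol 1 0 0 (by linear_combination hA0) (by linear_combination h)
        (by linear_combination hA2)
      exact one_ne_zero h'
    have hB0 : g 1 0 ≠ 0 := by
      intro hb0
      obtain ⟨-, h', -⟩ := hcol (g 1 1) (-(g 0 1)) 0
        (by linear_combination g 1 1 * hA0 - g 0 1 * hb0) (by ring)
        (by linear_combination g 1 1 * hA2 - g 0 1 * hB2)
      exact hA1 (neg_eq_zero.mp h')
    have e1 : g 0 1 * (γ * g 1 0 - g 2 2) = 0 := by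
      linear_combination h2e2 - γ' * h2e1
        + (g 0 0 * γ' - 2 * g 0 1 + g 1 0 * γ * γ' - g 1 1 * γ) * hA0
        + (g 0 1 + g 1 1 * γ - g 2 1) * hA2
    have e2 : γ * g 1 0 - g 2 2 = 0 := (mul_eq_zero.mp e1).resolve_left hA1
    have e3 : g 1 0 * ((1 + γ) * g 1 0 - g 2 2) = 0 := by
      linear_combination h3e1 - g 1 0 * hA0 + g 1 0 * hA2
        + (g 1 0 + g 1 0 * γ - g 2 0) * hB2
    have e4 : (1 + γ) * g 1 0 - g 2 2 = 0 := (mul_eq_zero.mp e3).resolve_left hB0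
    exact absurd (show g 1 0 = 0 by linear_combination e4 - e2) hB0
  · have eA : g 0 0 + γ * g 1 0 - g 2 2 = 0 := by
      have e : g 0 0 * (g 0 0 + γ * g 1 0 - g 2 2) = 0 := by
        linear_combination h2e1 + (g 0 0 + g 1 0 * γ - g 2 0) * hA2
      exact (mul_eq_zero.mp e).resolve_left hA0
    by_cases hB0 : g 1 0 = 0
    · have hB1 : g 1 1 ≠ 0 := by
        intro h
        obtain ⟨-, h', -⟩ := hcol 0 1 0 (by linear_combination hB0) (by linear_combination h)
          (by linear_combination hB2)
        exact one_ne_zero h'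
      have eA' : g 0 0 - g 2 2 = 0 := by linear_combination eA - γ * hB0
      have e5 : g 2 2 * (g 0 1 + γ * g 1 1 - g 2 2 * γ') = 0 := by
        linear_combination h2e2 - γ' * h2e1
          + (g 0 1 + g 1 1 * γ - g 2 1) * hA2
          + (g 0 0 * γ * γ' - g 0 1 * γ) * hB0
          + (g 0 0 * γ' - 2 * g 0 1 - g 1 1 * γ + g 2 2 * γ') * eA'
      have e6 : g 0 1 + γ * g 1 1 - g 2 2 * γ' = 0 := (mul_eq_zero.mp e5).resolve_left hC2
      have e7 : g 2 2 * g 0 1 = 0 := by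
        linear_combination -h2e3
          + (-(g 0 1) - g 0 1 * γ' - g 1 1 * γ - g 1 1 * γ * γ' + g 2 1 + g 2 1 * γ') * hA2
          + g 0 1 * e6
      have hA1 : g 0 1 = 0 := (mul_eq_zero.mp e7).resolve_left hC2
      have e8 : g 1 1 * ((1 + γ) * g 1 1 - g 2 2 * (1 + γ')) = 0 := by
        linear_combination h3e3 + (g 1 1 + g 1 1 * γ') * hA2
          + (g 1 1 + g 1 1 * γ + g 1 1 * γ * γ' + g 1 1 * γ' - g 2 1 - g 2 1 * γ') * hB2
          - g 1 1 * hA1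
      have e9 : (1 + γ) * g 1 1 - g 2 2 * (1 + γ') = 0 := (mul_eq_zero.mp e8).resolve_left hB1
      have e10 : g 1 1 - g 2 2 = 0 := by linear_combination e9 - e6 + hA1
      have e11 : g 2 2 * (γ - γ') = 0 := by linear_combination e6 - γ * e10 - hA1
      exact sub_eq_zero.mp ((mul_eq_zero.mp e11).resolve_left hC2)
    · have eB : g 0 0 + (1 + γ) * g 1 0 - g 2 2 = 0 := by
        have e : g 1 0 * (g 0 0 + (1 + γ) * g 1 0 - g 2 2) = 0 := by
          linear_combination h3e1 + g 1 0 * hA2 + (g 1 0 + g 1 0 * γ - g 2 0) * hB2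
        exact (mul_eq_zero.mp e).resolve_left hB0
      exact absurd (show g 1 0 = 0 by linear_combination eB - eA) hB0


lemma fin01 (g : Fin 3 → Fin 3 → k) (γ ε γ' ε' : k) (he : ε = 0) (he' : ε' = 1)
    (hcol : ∀ x y z : k, (x * g 0 0 + y * g 1 0 + z * g 2 0 = 0) →
      (x * g 0 1 + y * g 1 1 + z * g 2 1 = 0) →
      (x * g 0 2 + y * g 1 2 + z * g 2 2 = 0) → x = 0 ∧ y = 0 ∧ z = 0)
    (hrow : ¬(g 0 2 = 0 ∧ g 1 2 = 0 ∧ g 2 2 = 0))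
    (h1 :
      ((g 0 0 * g 1 0 - g 1 0 * g 0 0) = (g 0 2 * g 1 0 - g 1 2 * g 0 0) * ε') ∧
      ((g 0 0 * g 1 1 - g 1 0 * g 0 1) + (g 0 1 * g 1 0 - g 1 1 * g 0 0) = (g 0 2 * g 1 0 - g 1 2 * g 0 0) * γ' + (g 0 2 * g 1 1 - g 1 2 * g 0 1) * ε') ∧
      ((g 0 1 * g 1 1 - g 1 1 * g 0 1) = (g 0 2 * g 1 1 - g 1 2 * g 0 1) * (1 + γ')) ∧
      ((g 0 0 * g 1 2 - g 1 0 * g 0 2) + (g 0 2 * g 1 0 - g 1 2 * g 0 0) = 0) ∧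
      ((g 0 1 * g 1 2 - g 1 1 * g 0 2) + (g 0 2 * g 1 1 - g 1 2 * g 0 1) = 0) ∧
      ((g 0 2 * g 1 2 - g 1 2 * g 0 2) = 0))
    (h2 :
      ((g 2 0 * g 0 0 - g 0 0 * g 2 0 + ε * (g 0 0 * g 0 0) + γ * (g 0 0 * g 1 0)) = (g 2 2 * g 0 0 - g 0 2 * g 2 0 + ε * (g 0 2 * g 0 0) + γ * (g 0 2 * g 1 0)) * ε') ∧
      ((g 2 0 * g 0 1 - g 0 0 * g 2 1 + ε * (g 0 0 * g 0 1) + γ * (g 0 0 * g 1 1)) + (g 2 1 * g 0 0 - g 0 1 * g 2 0 + ε * (g 0 1 * g 0 0) + γ * (g 0 1 * g 1 0)) = (g 2 2 * g 0 0 - g 0 2 * g 2 0 + ε * (g 0 2 * g 0 0) + γ * (g 0 2 * g 1 0)) * γ' + (g 2 2 * g 0 1 - g 0 2 * g 2 1 + ε * (g 0 2 * g 0 1) + γ * (g 0 2 * g 1 1)) * ε') ∧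
      ((g 2 1 * g 0 1 - g 0 1 * g 2 1 + ε * (g 0 1 * g 0 1) + γ * (g 0 1 * g 1 1)) = (g 2 2 * g 0 1 - g 0 2 * g 2 1 + ε * (g 0 2 * g 0 1) + γ * (g 0 2 * g 1 1)) * (1 + γ')) ∧
      ((g 2 0 * g 0 2 - g 0 0 * g 2 2 + ε * (g 0 0 * g 0 2) + γ * (g 0 0 * g 1 2)) + (g 2 2 * g 0 0 - g 0 2 * g 2 0 + ε * (g 0 2 * g 0 0) + γ * (g 0 2 * g 1 0)) = 0) ∧
      ((g 2 1 * g 0 2 - g 0 1 * g 2 2 + ε * (g 0 1 * g 0 2) + γ * (g 0 1 * g 1 2)) + (g 2 2 * g 0 1 - g 0 2 * g 2 1 + ε * (g 0 2 * g 0 1) + γ * (g 0 2 * g 1 1)) = 0) ∧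
      ((g 2 2 * g 0 2 - g 0 2 * g 2 2 + ε * (g 0 2 * g 0 2) + γ * (g 0 2 * g 1 2)) = 0))
    (h3 :
      ((g 2 0 * g 1 0 - g 1 0 * g 2 0 + ε * (g 0 0 * g 1 0) + (1 + γ) * (g 1 0 * g 1 0)) = (g 2 2 * g 1 0 - g 1 2 * g 2 0 + ε * (g 0 2 * g 1 0) + (1 + γ) * (g 1 2 * g 1 0)) * ε') ∧
      ((g 2 0 * g 1 1 - g 1 0 * g 2 1 + ε * (g 0 0 * g 1 1) + (1 + γ) * (g 1 0 * g 1 1)) + (g 2 1 * g 1 0 - g 1 1 * g 2 0 + ε * (g 0 1 * g 1 0) + (1 + γ) * (g 1 1 * g 1 0)) = (g 2 2 * g 1 0 - g 1 2 * g 2 0 + ε * (g 0 2 * g 1 0) + (1 + γ) * (g 1 2 * g 1 0)) * γ' + (g 2 2 * g 1 1 - g 1 2 * g 2 1 + ε * (g 0 2 * g 1 1) + (1 + γ) * (g 1 2 * g 1 1)) * ε') ∧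
      ((g 2 1 * g 1 1 - g 1 1 * g 2 1 + ε * (g 0 1 * g 1 1) + (1 + γ) * (g 1 1 * g 1 1)) = (g 2 2 * g 1 1 - g 1 2 * g 2 1 + ε * (g 0 2 * g 1 1) + (1 + γ) * (g 1 2 * g 1 1)) * (1 + γ')) ∧
      ((g 2 0 * g 1 2 - g 1 0 * g 2 2 + ε * (g 0 0 * g 1 2) + (1 + γ) * (g 1 0 * g 1 2)) + (g 2 2 * g 1 0 - g 1 2 * g 2 0 + ε * (g 0 2 * g 1 0) + (1 + γ) * (g 1 2 * g 1 0)) = 0) ∧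
      ((g 2 1 * g 1 2 - g 1 1 * g 2 2 + ε * (g 0 1 * g 1 2) + (1 + γ) * (g 1 1 * g 1 2)) + (g 2 2 * g 1 1 - g 1 2 * g 2 1 + ε * (g 0 2 * g 1 1) + (1 + γ) * (g 1 2 * g 1 1)) = 0) ∧
      ((g 2 2 * g 1 2 - g 1 2 * g 2 2 + ε * (g 0 2 * g 1 2) + (1 + γ) * (g 1 2 * g 1 2)) = 0)) : False := by
  subst he he'
  obtain ⟨h1e1, h1e2, h1e3, h1e4, h1e5, h1e6⟩ := h1
  obtain ⟨h2e1, h2e2, h2e3, h2e4, h2e5, h2e6⟩ := h2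
  obtain ⟨h3e1, h3e2, h3e3, h3e4, h3e5, h3e6⟩ := h3
  have k1 : g 0 2 * g 1 0 - g 1 2 * g 0 0 = 0 := by linear_combination -h1e1
  have k2 : g 0 2 * g 1 1 - g 1 2 * g 0 1 = 0 := by linear_combination -h1e2 + γ' * h1e1
  obtain ⟨hB2, hA2n, -⟩ := hcol (g 1 2) (-(g 0 2)) 0
    (by linear_combination -k1) (by linear_combination -k2) (by ring)
  have hA2 : g 0 2 = 0 := neg_eq_zero.mp hA2n
  have hC2 : g 2 2 ≠ 0 := fun hc => hrow ⟨hA2, hB2, hc⟩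
  by_cases hB0 : g 1 0 = 0
  · have hB1 : g 1 1 ≠ 0 := by
      intro h
      obtain ⟨-, h', -⟩ := hcol 0 1 0 (by linear_combination hB0) (by linear_combination h)
        (by linear_combination hB2)
      exact one_ne_zero h'
    have e : g 2 2 * g 1 1 = 0 := by
      linear_combination -h3e2
        + (-(g 1 0 * γ * γ') - g 1 0 * γ' - g 1 1 - g 1 1 * γ + g 2 0 * γ' + g 2 1) * hB2
        + (2 * g 1 1 + 2 * (g 1 1 * γ) - g 2 2 * γ') * hB0
    exact hB1 ((mul_eq_zero.mp e).resolve_left hC2)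
  · have e4 : (1 + γ) * g 1 0 - g 2 2 = 0 := by
      have e : g 1 0 * ((1 + γ) * g 1 0 - g 2 2) = 0 := by
        linear_combination h3e1 + (g 1 0 + g 1 0 * γ - g 2 0) * hB2
      exact (mul_eq_zero.mp e).resolve_left hB0
    by_cases hB1 : g 1 1 = 0
    · have egp' : g 2 2 * (g 1 0 * γ') = 0 := by
        linear_combination -h3e2
          + (-(g 1 0 * γ * γ') - g 1 0 * γ' - g 1 1 - g 1 1 * γ + g 2 0 * γ' + g 2 1) * hB2
          + (2 * g 1 0 + 2 * (g 1 0 * γ) - g 2 2) * hB1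
      have hgp : γ' = 0 := by
        rcases mul_eq_zero.mp ((mul_eq_zero.mp egp').resolve_left hC2) with h | h
        · exact absurd h hB0
        · exact h
      have eA1' : g 2 2 * g 0 1 = 0 := by
        linear_combination -h2e3
          + (-(g 1 1 * γ) - g 1 1 * γ * γ' + g 2 1 + g 2 1 * γ') * hA2
          + (g 0 1 * γ) * hB1 + (-(g 0 1 * g 2 2)) * hgp
      have hA1 : g 0 1 = 0 := (mul_eq_zero.mp eA1').resolve_left hC2
      obtain ⟨h', -, -⟩ := hcol (g 1 0) (-(g 0 0)) 0 (by ring)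
        (by linear_combination g 1 0 * hA1 - g 0 0 * hB1)
        (by linear_combination g 1 0 * hA2 - g 0 0 * hB2)
      exact hB0 h'
    · have e9 : (1 + γ) * g 1 1 - g 2 2 * (1 + γ') = 0 := by
        have e : g 1 1 * ((1 + γ) * g 1 1 - g 2 2 * (1 + γ')) = 0 := by
          linear_combination h3e3
            + (g 1 1 + g 1 1 * γ + g 1 1 * γ * γ' + g 1 1 * γ' - g 2 1 - g 2 1 * γ') * hB2
        exact (mul_eq_zero.mp e).resolve_left hB1
      have eBB : g 1 1 - g 1 0 * γ' = 0 := by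
        have e : g 2 2 * (g 1 1 - g 1 0 * γ') = 0 := by
          linear_combination h3e2
            + (g 1 0 * γ * γ' + g 1 0 * γ' + g 1 1 + g 1 1 * γ - g 2 0 * γ' - g 2 1) * hB2
            - (2 * g 1 1) * e4
        exact (mul_eq_zero.mp e).resolve_left hC2
      have efin : g 2 2 * g 2 2 = 0 := by
        linear_combination -(g 2 2) * e9 + (g 2 2 + g 2 2 * γ) * eBB + (g 2 2 * γ') * e4
      exact hC2 ((mul_eq_zero.mp efin).resolve_left hC2)


lemma fin00 (g : Fin 3 → Fin 3 → k) (γ ε γ' ε' : k) (h2ne : (2:k) ≠ 0)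
    (he : ε = 0) (he' : ε' = 0)
    (hcol : ∀ x y z : k, (x * g 0 0 + y * g 1 0 + z * g 2 0 = 0) →
      (x * g 0 1 + y * g 1 1 + z * g 2 1 = 0) →
      (x * g 0 2 + y * g 1 2 + z * g 2 2 = 0) → x = 0 ∧ y = 0 ∧ z = 0)
    (hrow : ¬(g 0 2 = 0 ∧ g 1 2 = 0 ∧ g 2 2 = 0))
    (h1 :
      ((g 0 0 * g 1 0 - g 1 0 * g 0 0) = (g 0 2 * g 1 0 - g 1 2 * g 0 0) * ε') ∧
      ((g 0 0 * g 1 1 - g 1 0 * g 0 1) + (g 0 1 * g 1 0 - g 1 1 * g 0 0) = (g 0 2 * g 1 0 - g 1 2 * g 0 0) * γ' + (g 0 2 * g 1 1 - g 1 2 * g 0 1) * ε') ∧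
      ((g 0 1 * g 1 1 - g 1 1 * g 0 1) = (g 0 2 * g 1 1 - g 1 2 * g 0 1) * (1 + γ')) ∧
      ((g 0 0 * g 1 2 - g 1 0 * g 0 2) + (g 0 2 * g 1 0 - g 1 2 * g 0 0) = 0) ∧
      ((g 0 1 * g 1 2 - g 1 1 * g 0 2) + (g 0 2 * g 1 1 - g 1 2 * g 0 1) = 0) ∧
      ((g 0 2 * g 1 2 - g 1 2 * g 0 2) = 0))
    (h2 :
      ((g 2 0 * g 0 0 - g 0 0 * g 2 0 + ε * (g 0 0 * g 0 0) + γ * (g 0 0 * g 1 0)) = (g 2 2 * g 0 0 - g 0 2 * g 2 0 + ε * (g 0 2 * g 0 0) + γ * (g 0 2 * g 1 0)) * ε') ∧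
      ((g 2 0 * g 0 1 - g 0 0 * g 2 1 + ε * (g 0 0 * g 0 1) + γ * (g 0 0 * g 1 1)) + (g 2 1 * g 0 0 - g 0 1 * g 2 0 + ε * (g 0 1 * g 0 0) + γ * (g 0 1 * g 1 0)) = (g 2 2 * g 0 0 - g 0 2 * g 2 0 + ε * (g 0 2 * g 0 0) + γ * (g 0 2 * g 1 0)) * γ' + (g 2 2 * g 0 1 - g 0 2 * g 2 1 + ε * (g 0 2 * g 0 1) + γ * (g 0 2 * g 1 1)) * ε') ∧
      ((g 2 1 * g 0 1 - g 0 1 * g 2 1 + ε * (g 0 1 * g 0 1) + γ * (g 0 1 * g 1 1)) = (g 2 2 * g 0 1 - g 0 2 * g 2 1 + ε * (g 0 2 * g 0 1) + γ * (g 0 2 * g 1 1)) * (1 + γ')) ∧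
      ((g 2 0 * g 0 2 - g 0 0 * g 2 2 + ε * (g 0 0 * g 0 2) + γ * (g 0 0 * g 1 2)) + (g 2 2 * g 0 0 - g 0 2 * g 2 0 + ε * (g 0 2 * g 0 0) + γ * (g 0 2 * g 1 0)) = 0) ∧
      ((g 2 1 * g 0 2 - g 0 1 * g 2 2 + ε * (g 0 1 * g 0 2) + γ * (g 0 1 * g 1 2)) + (g 2 2 * g 0 1 - g 0 2 * g 2 1 + ε * (g 0 2 * g 0 1) + γ * (g 0 2 * g 1 1)) = 0) ∧
      ((g 2 2 * g 0 2 - g 0 2 * g 2 2 + ε * (g 0 2 * g 0 2) + γ * (g 0 2 * g 1 2)) = 0))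
    (h3 :
      ((g 2 0 * g 1 0 - g 1 0 * g 2 0 + ε * (g 0 0 * g 1 0) + (1 + γ) * (g 1 0 * g 1 0)) = (g 2 2 * g 1 0 - g 1 2 * g 2 0 + ε * (g 0 2 * g 1 0) + (1 + γ) * (g 1 2 * g 1 0)) * ε') ∧
      ((g 2 0 * g 1 1 - g 1 0 * g 2 1 + ε * (g 0 0 * g 1 1) + (1 + γ) * (g 1 0 * g 1 1)) + (g 2 1 * g 1 0 - g 1 1 * g 2 0 + ε * (g 0 1 * g 1 0) + (1 + γ) * (g 1 1 * g 1 0)) = (g 2 2 * g 1 0 - g 1 2 * g 2 0 + ε * (g 0 2 * g 1 0) + (1 + γ) * (g 1 2 * g 1 0)) * γ' + (g 2 2 * g 1 1 - g 1 2 * g 2 1 + ε * (g 0 2 * g 1 1) + (1 + γ) * (g 1 2 * g 1 1)) * ε') ∧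
      ((g 2 1 * g 1 1 - g 1 1 * g 2 1 + ε * (g 0 1 * g 1 1) + (1 + γ) * (g 1 1 * g 1 1)) = (g 2 2 * g 1 1 - g 1 2 * g 2 1 + ε * (g 0 2 * g 1 1) + (1 + γ) * (g 1 2 * g 1 1)) * (1 + γ')) ∧
      ((g 2 0 * g 1 2 - g 1 0 * g 2 2 + ε * (g 0 0 * g 1 2) + (1 + γ) * (g 1 0 * g 1 2)) + (g 2 2 * g 1 0 - g 1 2 * g 2 0 + ε * (g 0 2 * g 1 0) + (1 + γ) * (g 1 2 * g 1 0)) = 0) ∧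
      ((g 2 1 * g 1 2 - g 1 1 * g 2 2 + ε * (g 0 1 * g 1 2) + (1 + γ) * (g 1 1 * g 1 2)) + (g 2 2 * g 1 1 - g 1 2 * g 2 1 + ε * (g 0 2 * g 1 1) + (1 + γ) * (g 1 2 * g 1 1)) = 0) ∧
      ((g 2 2 * g 1 2 - g 1 2 * g 2 2 + ε * (g 0 2 * g 1 2) + (1 + γ) * (g 1 2 * g 1 2)) = 0)) : γ = γ' := by
  subst he he'
  obtain ⟨h1e1, h1e2, h1e3, h1e4, h1e5, h1e6⟩ := h1
  obtain ⟨h2e1, h2e2, h2e3, h2e4, h2e5, h2e6⟩ := h2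
  obtain ⟨h3e1, h3e2, h3e3, h3e4, h3e5, h3e6⟩ := h3
  by_cases hga0 : γ = 0
  · -- case γ = 0 : show γ' = 0
    rw [hga0]
    have hB0 : g 1 0 = 0 := by
      have e : g 1 0 * g 1 0 = 0 := by
        linear_combination h3e1 - (g 1 0 * g 1 0) * hga0
      exact mul_self_eq_zero.mp e
    have hB2 : g 1 2 = 0 := by
      have e : g 1 2 * g 1 2 = 0 := by
        linear_combination h3e6 - (g 1 2 * g 1 2) * hga0
      exact mul_self_eq_zero.mp e
    have hB1 : g 1 1 ≠ 0 := by
      intro h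
      obtain ⟨-, h', -⟩ := hcol 0 1 0 (by linear_combination hB0) (by linear_combination h)
        (by linear_combination hB2)
      exact one_ne_zero h'
    have eb1 : g 1 1 - g 2 2 * (1 + γ') = 0 := by
      have e : g 1 1 * (g 1 1 - g 2 2 * (1 + γ')) = 0 := by
        linear_combination h3e3
          + (-(g 1 1 * g 1 1) + g 1 1 * g 1 2 + g 1 1 * g 1 2 * γ') * hga0
          + (g 1 1 + g 1 1 * γ' - g 2 1 - g 2 1 * γ') * hB2
      exact (mul_eq_zero.mp e).resolve_left hB1
    have hgp1 : (1:k) + γ' ≠ 0 := fun h => hB1 (by linear_combination eb1 + g 2 2 * h)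
    have hC2 : g 2 2 ≠ 0 := fun h => hB1 (by linear_combination eb1 + (1 + γ') * h)
    have hA2 : g 0 2 = 0 := by
      have e : g 0 2 * g 1 1 * (1 + γ') = 0 := by
        linear_combination -h1e3 + (g 0 1 + g 0 1 * γ') * hB2
      exact (mul_eq_zero.mp ((mul_eq_zero.mp e).resolve_right hgp1)).resolve_right hB1
    have hA1 : g 0 1 = 0 := by
      have e : g 2 2 * g 0 1 * (1 + γ') = 0 := by
        linear_combination -h2e3
          + (g 0 1 * g 1 1 - g 0 2 * g 1 1 - g 0 2 * g 1 1 * γ') * hga0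
          + (g 2 1 + g 2 1 * γ') * hA2
      exact (mul_eq_zero.mp ((mul_eq_zero.mp e).resolve_right hgp1)).resolve_left hC2
    have hA0 : g 0 0 ≠ 0 := by
      intro h
      obtain ⟨h', -, -⟩ := hcol 1 0 0 (by linear_combination h) (by linear_combination hA1)
        (by linear_combination hA2)
      exact one_ne_zero h'
    have efin : g 2 2 * g 0 0 * γ' = 0 := by
      linear_combination -h2e2
        + (g 0 0 * g 1 1 + g 0 1 * g 1 0 - g 0 2 * g 1 0 * γ') * hga0
        + (g 2 0 * γ') * hA2
    exact (((mul_eq_zero.mp efin).resolve_left (mul_ne_zero hC2 hA0))).symm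
  · by_cases hga1 : γ = -1
    · -- case γ = -1 : show γ' = -1
      rw [hga1]
      by_contra hne
      have hgp1 : (1:k) + γ' ≠ 0 := fun h => hne (by linear_combination -h)
      by_cases hgp0 : γ' = 0
      · -- γ' = 0 : contradiction
        have cK1 : g 0 0 * g 1 0 = 0 := by
          linear_combination -h2e1 + (g 0 0 * g 1 0) * hga1
        have cK2 : g 0 0 * g 1 1 + g 0 1 * g 1 0 = 0 := by
          linear_combination -h2e2
            + (g 0 0 * g 1 1 + g 0 1 * g 1 0 - g 0 2 * g 1 0 * γ') * hga1
            + (-(g 0 0 * g 2 2) + g 0 2 * g 1 0 + g 0 2 * g 2 0) * hgp0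
        have cK4 : g 0 0 * g 1 2 + g 0 2 * g 1 0 = 0 := by
          linear_combination -h2e4 + (g 0 0 * g 1 2 + g 0 2 * g 1 0) * hga1
        have cK5 : g 0 1 * g 1 2 + g 0 2 * g 1 1 = 0 := by
          linear_combination -h2e5 + (g 0 1 * g 1 2 + g 0 2 * g 1 1) * hga1
        have cK6 : g 0 2 * g 1 2 = 0 := by
          linear_combination -h2e6 + (g 0 2 * g 1 2) * hga1
        have cj2b : g 0 2 * g 1 1 - g 1 2 * g 0 1 = 0 := by
          linear_combination -h1e3 + (g 0 1 * g 1 2 - g 0 2 * g 1 1) * hgp0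
        have eA2B1 : g 0 2 * g 1 1 = 0 := by
          have e : (2:k) * (g 0 2 * g 1 1) = 0 := by linear_combination cK5 + cj2b
          exact (mul_eq_zero.mp e).resolve_left h2ne
        have eA1B2 : g 0 1 * g 1 2 = 0 := by linear_combination cK5 - eA2B1
        by_cases hA0 : g 0 0 = 0
        · by_cases hA1 : g 0 1 = 0
          · have hA2n : g 0 2 ≠ 0 := by
              intro h
              obtain ⟨h', -, -⟩ := hcol 1 0 0 (by linear_combination hA0)
                (by linear_combination hA1) (by linear_combination h)
              exact one_ne_zero h'
            have hB0 : g 1 0 = 0 := by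
              have e : g 0 2 * g 1 0 = 0 := by linear_combination cK4 - g 1 2 * hA0
              exact (mul_eq_zero.mp e).resolve_left hA2n
            have hB1 : g 1 1 = 0 := (mul_eq_zero.mp eA2B1).resolve_left hA2n
            have hB2 : g 1 2 = 0 := (mul_eq_zero.mp cK6).resolve_left hA2n
            obtain ⟨-, h', -⟩ := hcol 0 1 0 (by linear_combination hB0)
              (by linear_combination hB1) (by linear_combination hB2)
            exact one_ne_zero h'
          · have hB2 : g 1 2 = 0 := (mul_eq_zero.mp eA1B2).resolve_left hA1
            have hB0 : g 1 0 = 0 := by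
              have e : g 0 1 * g 1 0 = 0 := by linear_combination cK2 - g 1 1 * hA0
              exact (mul_eq_zero.mp e).resolve_left hA1
            have hB1 : g 1 1 ≠ 0 := by
              intro h
              obtain ⟨-, h', -⟩ := hcol 0 1 0 (by linear_combination hB0)
                (by linear_combination h) (by linear_combination hB2)
              exact one_ne_zero h'
            have hA2 : g 0 2 = 0 := (mul_eq_zero.mp eA2B1).resolve_right hB1
            obtain ⟨-, h', -⟩ := hcol (g 1 1) (-(g 0 1)) 0
              (by linear_combination g 1 1 * hA0 - g 0 1 * hB0) (by ring)
              (by linear_combination g 1 1 * hA2 - g 0 1 * hB2)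
            exact hA1 (neg_eq_zero.mp h')
        · have hB0 : g 1 0 = 0 := (mul_eq_zero.mp cK1).resolve_left hA0
          have hB1 : g 1 1 = 0 := by
            have e : g 0 0 * g 1 1 = 0 := by linear_combination cK2 - g 0 1 * hB0
            exact (mul_eq_zero.mp e).resolve_left hA0
          have hB2 : g 1 2 = 0 := by
            have e : g 0 0 * g 1 2 = 0 := by linear_combination cK4 - g 0 2 * hB0
            exact (mul_eq_zero.mp e).resolve_left hA0
          obtain ⟨-, h', -⟩ := hcol 0 1 0 (by linear_combination hB0)
            (by linear_combination hB1) (by linear_combination hB2)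
          exact one_ne_zero h'
      · -- γ' ≠ 0 : contradiction
        have j1 : g 0 2 * g 1 0 - g 1 2 * g 0 0 = 0 := by
          have e : (g 0 2 * g 1 0 - g 1 2 * g 0 0) * γ' = 0 := by linear_combination -h1e2
          exact (mul_eq_zero.mp e).resolve_right hgp0
        have j2 : g 0 2 * g 1 1 - g 1 2 * g 0 1 = 0 := by
          have e : (g 0 2 * g 1 1 - g 1 2 * g 0 1) * (1 + γ') = 0 := by
            linear_combination -h1e3
          exact (mul_eq_zero.mp e).resolve_right hgp1
        obtain ⟨hB2, hA2n, -⟩ := hcol (g 1 2) (-(g 0 2)) 0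
          (by linear_combination -j1) (by linear_combination -j2) (by ring)
        have hA2 : g 0 2 = 0 := neg_eq_zero.mp hA2n
        have hC2 : g 2 2 ≠ 0 := fun hc => hrow ⟨hA2, hB2, hc⟩
        have hB0 : g 1 0 = 0 := by
          have e : g 2 2 * g 1 0 * γ' = 0 := by
            linear_combination -h3e2
              + (2 * (g 1 0 * g 1 1) - g 1 0 * g 1 2 * γ') * hga1
              + (g 2 0 * γ') * hB2
          exact (mul_eq_zero.mp ((mul_eq_zero.mp e).resolve_right hgp0)).resolve_left hC2
        have hB1 : g 1 1 = 0 := by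
          have e : g 2 2 * g 1 1 * (1 + γ') = 0 := by
            linear_combination -h3e3
              + (g 1 1 * g 1 1 - g 1 1 * g 1 2 - g 1 1 * g 1 2 * γ') * hga1
              + (g 2 1 + g 2 1 * γ') * hB2
          exact (mul_eq_zero.mp ((mul_eq_zero.mp e).resolve_right hgp1)).resolve_left hC2
        obtain ⟨-, h', -⟩ := hcol 0 1 0 (by linear_combination hB0)
          (by linear_combination hB1) (by linear_combination hB2)
        exact one_ne_zero h'
    · -- case γ ≠ 0, γ ≠ -1
      have h1ga : (1:k) + γ ≠ 0 := fun h => hga1 (by linear_combination h)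
      have hB0 : g 1 0 = 0 := by
        have e : (1 + γ) * (g 1 0 * g 1 0) = 0 := by linear_combination h3e1
        exact mul_self_eq_zero.mp ((mul_eq_zero.mp e).resolve_left h1ga)
      have hB2 : g 1 2 = 0 := by
        have e : (1 + γ) * (g 1 2 * g 1 2) = 0 := by linear_combination h3e6
        exact mul_self_eq_zero.mp ((mul_eq_zero.mp e).resolve_left h1ga)
      have hB1 : g 1 1 ≠ 0 := by
        intro h
        obtain ⟨-, h', -⟩ := hcol 0 1 0 (by linear_combination hB0) (by linear_combination h)
          (by linear_combination hB2)
        exact one_ne_zero h'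
      have hA2 : g 0 2 = 0 := by
        have e : γ * (g 0 2 * g 1 1) = 0 := by
          linear_combination h2e5 - (g 0 1 * γ) * hB2
        exact (mul_eq_zero.mp ((mul_eq_zero.mp e).resolve_left hga0)).resolve_right hB1
      have hC2 : g 2 2 ≠ 0 := fun hc => hrow ⟨hA2, hB2, hc⟩
      have hA0 : g 0 0 ≠ 0 := by
        intro h
        obtain ⟨h', -, -⟩ := hcol (g 1 1) (-(g 0 1)) 0
          (by linear_combination g 1 1 * h - g 0 1 * hB0) (by ring)
          (by linear_combination g 1 1 * hA2 - g 0 1 * hB2)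
        exact hB1 h'
      have eK2 : γ * g 1 1 - g 2 2 * γ' = 0 := by
        have e : g 0 0 * (γ * g 1 1 - g 2 2 * γ') = 0 := by
          linear_combination h2e2 + (-(g 0 1 * γ) + g 0 2 * γ * γ') * hB0
            + (-(g 2 0 * γ')) * hA2
        exact (mul_eq_zero.mp e).resolve_left hA0
      have eM3 : (1 + γ) * g 1 1 - g 2 2 * (1 + γ') = 0 := by
        have e : g 1 1 * ((1 + γ) * g 1 1 - g 2 2 * (1 + γ')) = 0 := by
          linear_combination h3e3
            + (g 1 1 + g 1 1 * γ + g 1 1 * γ * γ' + g 1 1 * γ' - g 2 1 - g 2 1 * γ') * hB2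
        exact (mul_eq_zero.mp e).resolve_left hB1
      have eb2 : g 1 1 - g 2 2 = 0 := by linear_combination eM3 - eK2
      have efin : g 2 2 * (γ - γ') = 0 := by linear_combination eK2 - γ * eb2
      exact sub_eq_zero.mp ((mul_eq_zero.mp efin).resolve_left hC2)

end

theorem stmt10 (k : Type) [Field k] [IsAlgClosed k] (hchar : ringChar k ≠ 2)
    (γ γ' ε ε' : k) (hε : ε ∈ ({0, 1} : Set k)) (hε' : ε' ∈ ({0, 1} : Set k)) :
    GradedIso k (Wrel k γ ε) (Wrel k γ' ε') ↔ ε = ε' ∧ γ = γ' := by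
  have h2ne : (2:k) ≠ 0 := by
    intro h20
    have hd : ringChar k ∣ 2 := by
      have inst := ringChar.charP k
      exact (CharP.cast_eq_zero_iff k (ringChar k) 2).mp (by exact_mod_cast h20)
    rcases (Nat.dvd_prime Nat.prime_two).mp hd with h1 | h1
    · exact CharP.char_ne_one k (ringChar k) h1
    · exact hchar h1
  constructor
  · rintro ⟨φ, hmap⟩
    obtain ⟨g, hcolg, hrowg, hg3⟩ := extract_coeffs φ hmap
    have H1 := rel1_eqs φ g hg3
    have H2 := rel2_eqs φ g hg3
    have H3 := rel3_eqs φ g hg3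
    have hmap' : Submodule.map φ.symm.toLinearMap (genSpan k (Wrel k γ' ε'))
        = genSpan k (Wrel k γ ε) := by
      rw [← hmap, ← Submodule.map_comp]
      have : (φ.symm.toLinearMap ∘ₗ φ.toLinearMap :
          quotAlg k (Wrel k γ ε) →ₗ[k] quotAlg k (Wrel k γ ε)) = LinearMap.id := by
        ext x; simp
      rw [this, Submodule.map_id]
    obtain ⟨g', hcolg', hrowg', hg3'⟩ := extract_coeffs φ.symm hmap'
    have H1' := rel1_eqs φ.symm g' hg3'
    have H2' := rel2_eqs φ.symm g' hg3'
    have H3' := rel3_eqs φ.symm g' hg3'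
    simp only [Set.mem_insert_iff, Set.mem_singleton_iff] at hε hε'
    rcases hε with hε | hε <;> rcases hε' with hε' | hε'
    · exact ⟨hε.trans hε'.symm, fin00 g γ ε γ' ε' h2ne hε hε' hcolg hrowg H1 H2 H3⟩
    · exact absurd (fin01 g γ ε γ' ε' hε hε' hcolg hrowg H1 H2 H3) not_false
    · exact absurd (fin01 g' γ' ε' γ ε hε' hε hcolg' hrowg' H1' H2' H3') not_false
    · exact ⟨hε.trans hε'.symm, fin11 g γ ε γ' ε' hε hε' hcolg hrowg H1 H2 H3⟩
  · rintro ⟨h1, h2⟩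
    subst h1; subst h2
    refine ⟨AlgEquiv.refl, ?_⟩
    rw [show (AlgEquiv.refl : quotAlg k (Wrel k γ ε) ≃ₐ[k] quotAlg k (Wrel k γ ε)).toLinearMap
      = LinearMap.id from rfl, Submodule.map_id]
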